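/- arXiv:2509.03050 — 2 statements merged into one kernel-verified Lean document; each statement's English description precedes it below -/
import Mathlib

section
/- For every unit i and every S ∈ S_i^β, ‖E[(1/n) Σ_{i' : N_i ∩ N_{i'} ≠ ∅} ω_i ω_{i'} X_{i'} ∏_{k∈S} Z_k]‖₂ ≤ (4 d_in d_out / n) · X_max · ((e d_in / β) · max{β², 1/(p(1−p))})^β. -/
noncomputable section

namespace SNIPE

open Finset

/-- The collection `S_i^β` of subsets of the in-neighborhood of unit `i` of size at most `β`. -/
def Sb (n β : ℕ) (Nb : Fin n → Finset (Fin n)) (i : Fin n) : Finset (Finset (Fin n)) :=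
  (Nb i).powerset.filter fun s => s.card ≤ β

/-- `g(S) = ∏_{j∈S}(1-p_j) - ∏_{j∈S}(-p_j)`. -/
def gcoef {n : ℕ} (prob : Fin n → ℝ) (s : Finset (Fin n)) : ℝ :=
  (∏ j ∈ s, (1 - prob j)) - ∏ j ∈ s, (-prob j)

/-- The SNIPE weight `ω_i`, as a function of the treatment realization `z`. -/
def wt (n β : ℕ) (Nb : Fin n → Finset (Fin n)) (prob : Fin n → ℝ) (i : Fin n)
    (z : Fin n → ℝ) : ℝ :=
  ∑ s ∈ Sb n β Nb i, gcoef prob s * ∏ j ∈ s, (z j - prob j) / (prob j * (1 - prob j))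

/-- The β-order interaction potential-outcome model `Y_i(z) = ∑_{S∈S_i^β} α_{i,S} ∏_{j∈S} z_j`. -/
def Ypot (n β : ℕ) (Nb : Fin n → Finset (Fin n)) (α : Fin n → Finset (Fin n) → ℝ)
    (i : Fin n) (z : Fin n → ℝ) : ℝ :=
  ∑ s ∈ Sb n β Nb i, α i s * ∏ j ∈ s, z j

/-- The coefficient estimator `α̂_{i,S}`, where `Yval` is the observed outcome of unit `i`. -/
def alphaHat (n β : ℕ) (Nb : Fin n → Finset (Fin n)) (prob : Fin n → ℝ)
    (Yval : ℝ) (i : Fin n) (s : Finset (Fin n)) (z : Fin n → ℝ) : ℝ :=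
  Yval * (∏ j ∈ s, (-1 / prob j)) *
    ∑ u ∈ (Sb n β Nb i).filter (fun u => s ⊆ u), ∏ l ∈ u, (prob l - z l) / (1 - prob l)

/-- The ℓ2 norm of a finite real vector. -/
def l2 {d : ℕ} (v : Fin d → ℝ) : ℝ := Real.sqrt (∑ k, v k ^ 2)

/-- The covariance of two real random variables. -/
def covr {Ω : Type*} [MeasurableSpace Ω] (μ : MeasureTheory.Measure Ω) (f h : Ω → ℝ) : ℝ :=
  (∫ x, f x * h x ∂μ) - (∫ x, f x ∂μ) * ∫ x, h x ∂μ

/-- A randomized experiment on a population of `n` units joined by a directed interference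
network with all self-loops: treatments `Z_i` are mutually independent `Bernoulli(p_i)` random
variables with `p_i ∈ [p, 1-p]`, outcomes follow the `β`-order interaction model with
coefficients `α`, and each unit carries a deterministic covariate vector `X_i ∈ ℝ^{dX}`. -/
structure Setting (β dX : ℕ) (p : ℝ) where
  n : ℕ
  Ω : Type
  [mΩ : MeasurableSpace Ω]
  μ : MeasureTheory.Measure Ω
  isProb : MeasureTheory.IsProbabilityMeasure μ
  prob : Fin n → ℝ
  prob_mem : ∀ i, p ≤ prob i ∧ prob i ≤ 1 - p
  Z : Fin n → Ω → ℝ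
  Z_meas : ∀ i, Measurable (Z i)
  Z_indep : ProbabilityTheory.iIndepFun Z μ
  Z_range : ∀ i x, Z i x = 0 ∨ Z i x = 1
  Z_prob : ∀ i, μ (Z i ⁻¹' {1}) = ENNReal.ofReal (prob i)
  Nb : Fin n → Finset (Fin n)
  self_mem : ∀ i, i ∈ Nb i
  α : Fin n → Finset (Fin n) → ℝ
  X : Fin n → Fin dX → ℝ

attribute [instance] Setting.mΩ

open MeasureTheory ProbabilityTheory Filter Topology

namespace Setting

variable {β dX : ℕ} {p : ℝ}

/-- The SNIPE weight `ω_i` as a random variable. -/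
def w (St : Setting β dX p) (i : Fin St.n) (x : St.Ω) : ℝ :=
  wt St.n β St.Nb St.prob i fun j => St.Z j x

/-- The observed outcome `Y_i = Y_i(Z)`. -/
def Yo (St : Setting β dX p) (i : Fin St.n) (x : St.Ω) : ℝ :=
  Ypot St.n β St.Nb St.α i fun j => St.Z j x

/-- The total treatment effect `TTE = (1/n) ∑_i (Y_i(1) - Y_i(0))`. -/
def tte (St : Setting β dX p) : ℝ :=
  (St.n : ℝ)⁻¹ * ∑ i,
    (Ypot St.n β St.Nb St.α i (fun _ => 1) - Ypot St.n β St.Nb St.α i fun _ => 0)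

/-- The covariate-adjusted SNIPE estimator `TTÊ(θ) = (1/n) ∑_i ω_i (Y_i - θᵀ X_i)`. -/
def tteHat (St : Setting β dX p) (θ : Fin dX → ℝ) (x : St.Ω) : ℝ :=
  (St.n : ℝ)⁻¹ * ∑ i, St.w i x * (St.Yo i x - ∑ k, θ k * St.X i k)

/-- Expectation with respect to the design measure. -/
def E (St : Setting β dX p) (f : St.Ω → ℝ) : ℝ := ∫ x, f x ∂St.μ

/-- The units `i'` whose in-neighborhood intersects that of `i`. -/
def nbrs (St : Setting β dX p) (i : Fin St.n) : Finset (Fin St.n) :=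
  univ.filter fun i' => (St.Nb i ∩ St.Nb i').Nonempty

/-- The coefficient estimator `α̂_{i,S}` as a random variable. -/
def ahat (St : Setting β dX p) (i : Fin St.n) (s : Finset (Fin St.n)) (x : St.Ω) : ℝ :=
  alphaHat St.n β St.Nb St.prob (St.Yo i x) i s fun j => St.Z j x

/-- The Gram matrix `(1/n) ∑_i ω_i² X_i X_iᵀ` (a random matrix). -/
def regGramAt (St : Setting β dX p) (x : St.Ω) : Matrix (Fin dX) (Fin dX) ℝ :=
  Matrix.of fun k l : Fin dX => (St.n : ℝ)⁻¹ * ∑ i, St.w i x ^ 2 * St.X i k * St.X i l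

/-- `E[(1/n) ∑_i ω_i² X_i X_iᵀ]`. -/
def regGram (St : Setting β dX p) : Matrix (Fin dX) (Fin dX) ℝ :=
  Matrix.of fun k l : Fin dX =>
    St.E fun x => (St.n : ℝ)⁻¹ * ∑ i, St.w i x ^ 2 * St.X i k * St.X i l

/-- The regression-based adjustment coefficient estimator `θ̂_Reg`. -/
def thetaHatReg (St : Setting β dX p) (x : St.Ω) : Fin dX → ℝ :=
  Matrix.mulVec (St.regGramAt x)⁻¹
    fun k => (St.n : ℝ)⁻¹ * ∑ i, St.w i x ^ 2 * St.X i k * St.Yo i x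

/-- The population regression-based adjustment coefficient `θ_Reg`. -/
def thetaReg (St : Setting β dX p) : Fin dX → ℝ :=
  Matrix.mulVec St.regGram⁻¹
    fun k => St.E fun x => (St.n : ℝ)⁻¹ * ∑ i, St.w i x ^ 2 * St.X i k * St.Yo i x

/-- The matrix `G = E[(1/n²) ∑_i ∑_{i' : N_i ∩ N_{i'} ≠ ∅} ω_i ω_{i'} X_i X_{i'}ᵀ]`. -/
def Gmat (St : Setting β dX p) : Matrix (Fin dX) (Fin dX) ℝ :=
  Matrix.of fun k l : Fin dX => St.E fun x =>
    (((St.n : ℝ)) ^ 2)⁻¹ * ∑ i, ∑ i' ∈ St.nbrs i, St.w i x * St.w i' x * St.X i k * St.X i' l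

/-- `E[(1/n) ∑_{i' : N_i ∩ N_{i'} ≠ ∅} ω_i ω_{i'} X_{i'} ∏_{k∈S} Z_k]`. -/
def vimE (St : Setting β dX p) (i : Fin St.n) (s : Finset (Fin St.n)) (k : Fin dX) : ℝ :=
  St.E fun x =>
    (St.n : ℝ)⁻¹ * ∑ i' ∈ St.nbrs i, St.w i x * St.w i' x * St.X i' k * ∏ t ∈ s, St.Z t x

/-- The VIM adjustment coefficient estimator `θ̂_VIM`. -/
def thetaHatVIM (St : Setting β dX p) (x : St.Ω) : Fin dX → ℝ :=
  Matrix.mulVec St.Gmat⁻¹ fun k =>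
    (St.n : ℝ)⁻¹ * ∑ i, ∑ s ∈ Sb St.n β St.Nb i, St.ahat i s x * St.vimE i s k

/-- The population VIM adjustment coefficient `θ_VIM`. -/
def thetaVIM (St : Setting β dX p) : Fin dX → ℝ :=
  Matrix.mulVec St.Gmat⁻¹ fun k => St.E fun x =>
    (((St.n : ℝ)) ^ 2)⁻¹ * ∑ i, ∑ i' ∈ St.nbrs i, St.w i x * St.w i' x * St.X i k * St.Yo i' x

/-- The matrix `M` with `M_{ii'} = ∑_{S ∈ S_i^β ∩ S_{i'}^β} g(S)² ∏_{j∈S} 1/(p_j(1-p_j))`. -/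
def Mmat (St : Setting β dX p) : Matrix (Fin St.n) (Fin St.n) ℝ :=
  Matrix.of fun i i' : Fin St.n => ∑ s ∈ Sb St.n β St.Nb i ∩ Sb St.n β St.Nb i',
    gcoef St.prob s ^ 2 * ∏ j ∈ s, (St.prob j * (1 - St.prob j))⁻¹

/-- The matrix `(1/n) Xᵀ M X`. -/
def XtMX (St : Setting β dX p) : Matrix (Fin dX) (Fin dX) ℝ :=
  Matrix.of fun k l : Fin dX => (St.n : ℝ)⁻¹ * ∑ i, ∑ i', St.X i k * St.Mmat i i' * St.X i' l

/-- Potential outcome under the all-ones assignment. -/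
def Y1 (St : Setting β dX p) (i : Fin St.n) : ℝ := Ypot St.n β St.Nb St.α i fun _ => 1

/-- Potential outcome under the all-zeros assignment. -/
def Y0 (St : Setting β dX p) (i : Fin St.n) : ℝ := Ypot St.n β St.Nb St.α i fun _ => 0

/-- `S_XX = (1/n) ∑_i (X_i - X̄)(X_i - X̄)ᵀ`. -/
def SXX (St : Setting β dX p) : Matrix (Fin dX) (Fin dX) ℝ :=
  Matrix.of fun k l : Fin dX => (St.n : ℝ)⁻¹ * ∑ i,
    (St.X i k - (St.n : ℝ)⁻¹ * ∑ i', St.X i' k) * (St.X i l - (St.n : ℝ)⁻¹ * ∑ i', St.X i' l)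

/-- `S_XY(1) = (1/n) ∑_i (X_i - X̄)(Y_i(1) - Ȳ_1)`. -/
def SXY1 (St : Setting β dX p) : Fin dX → ℝ := fun k => (St.n : ℝ)⁻¹ * ∑ i,
  (St.X i k - (St.n : ℝ)⁻¹ * ∑ i', St.X i' k) * (St.Y1 i - (St.n : ℝ)⁻¹ * ∑ i', St.Y1 i')

/-- `S_XY(0) = (1/n) ∑_i (X_i - X̄)(Y_i(0) - Ȳ_0)`. -/
def SXY0 (St : Setting β dX p) : Fin dX → ℝ := fun k => (St.n : ℝ)⁻¹ * ∑ i,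
  (St.X i k - (St.n : ℝ)⁻¹ * ∑ i', St.X i' k) * (St.Y0 i - (St.n : ℝ)⁻¹ * ∑ i', St.Y0 i')

/-- `θ_Lin = (1-p₁) S_XX⁻¹ S_XY(1) + p₁ S_XX⁻¹ S_XY(0)`. -/
def thetaLin (St : Setting β dX p) (p1 : ℝ) : Fin dX → ℝ := fun k =>
  (1 - p1) * Matrix.mulVec St.SXX⁻¹ St.SXY1 k + p1 * Matrix.mulVec St.SXX⁻¹ St.SXY0 k

/-- The OLS slope coefficient of `Y` on `X` (regression with an intercept) within group `G`. -/
def olsSlope (St : Setting β dX p) (G : Finset (Fin St.n)) (x : St.Ω) : Fin dX → ℝ :=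
  Matrix.mulVec
    (Matrix.of fun k l : Fin dX =>
      ∑ i ∈ G, (St.X i k - (G.card : ℝ)⁻¹ * ∑ i' ∈ G, St.X i' k) *
               (St.X i l - (G.card : ℝ)⁻¹ * ∑ i' ∈ G, St.X i' l))⁻¹
    fun k => ∑ i ∈ G, (St.X i k - (G.card : ℝ)⁻¹ * ∑ i' ∈ G, St.X i' k) *
               (St.Yo i x - (G.card : ℝ)⁻¹ * ∑ i' ∈ G, St.Yo i' x)

/-- Lin's adjustment coefficient estimator
`θ̂_Lin = ((1/n)∑(1-Z_i)) θ̂_1 + ((1/n)∑ Z_i) θ̂_0`. -/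
def thetaHatLin (St : Setting β dX p) (x : St.Ω) : Fin dX → ℝ := fun k =>
  ((St.n : ℝ)⁻¹ * ∑ i, (1 - St.Z i x)) *
      St.olsSlope (univ.filter fun i => St.Z i x = 1) x k +
    ((St.n : ℝ)⁻¹ * ∑ i, St.Z i x) *
      St.olsSlope (univ.filter fun i => St.Z i x = 0) x k

/-- Assumption 3 (boundedness): `X_max ≤ C` and `Y_max ≤ C`. -/
def Assumption3 (St : Setting β dX p) (C : ℝ) : Prop :=
  (∀ i, (∑ k, |St.X i k|) ≤ C) ∧ ∀ i, (∑ s ∈ Sb St.n β St.Nb i, |St.α i s|) ≤ C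

/-- Assumption 4 (invertibility): the smallest eigenvalues of `(1/n) XᵀX` and `(1/n) XᵀMX`
are bounded below by `c`. -/
def Assumption4 (St : Setting β dX p) (c : ℝ) : Prop :=
  (∀ v : Fin dX → ℝ, c * (∑ k, v k ^ 2) ≤
      ∑ k, ∑ l, v k * ((St.n : ℝ)⁻¹ * ∑ i, St.X i k * St.X i l) * v l) ∧
    ∀ v : Fin dX → ℝ, c * (∑ k, v k ^ 2) ≤ ∑ k, ∑ l, v k * St.XtMX k l * v l

/-- All in-degrees and out-degrees of the interference network are at most `D`. -/
def degBdd (St : Setting β dX p) (D : ℕ) : Prop :=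
  (∀ i, (St.Nb i).card ≤ D) ∧ ∀ j, (univ.filter fun i => j ∈ St.Nb i).card ≤ D

end Setting

/-- A sequence of (vector-valued) random variables, over a sequence of experimental settings,
converges to zero in probability. -/
def convInProbToZero {β dX : ℕ} {p : ℝ} (S : ℕ → Setting β dX p)
    (f : ∀ m, (S m).Ω → Fin dX → ℝ) : Prop :=
  ∀ ε : ℝ, 0 < ε →
    Filter.Tendsto (fun m => (S m).μ {x | ε ≤ l2 (f m x)}) Filter.atTop (nhds (0 : ENNReal))

end SNIPE

open MeasureTheory ProbabilityTheory Filter Finset Topology SNIPE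

namespace SNIPE6

open MeasureTheory ProbabilityTheory Finset SNIPE


lemma aux_pow (n : ℕ) (hn : 1 ≤ n) : ((n:ℝ)+1)^n ≤ Real.exp 1 * (n:ℝ)^n := by
  have hn0 : (0:ℝ) < n := by exact_mod_cast hn
  have h1 : ((n:ℝ)+1) = (n:ℝ) * (1 + 1/n) := by field_simp
  have h2 : (1 + 1/(n:ℝ))^n ≤ Real.exp (1/(n:ℝ)) ^ n :=
    pow_le_pow_left₀ (by positivity) (by simpa [add_comm] using Real.add_one_le_exp (1/(n:ℝ))) n
  have h3 : Real.exp (1/(n:ℝ)) ^ n = Real.exp 1 := by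
    rw [← Real.exp_nat_mul]
    congr 1
    field_simp
  calc ((n:ℝ)+1)^n = (n:ℝ)^n * (1 + 1/n)^n := by rw [h1, mul_pow]
    _ ≤ (n:ℝ)^n * Real.exp 1 := by
        apply mul_le_mul_of_nonneg_left (h2.trans_eq h3) (by positivity)
    _ = Real.exp 1 * (n:ℝ)^n := mul_comm _ _

lemma pow_self_le : ∀ b : ℕ, ((b:ℝ))^b ≤ Real.exp 1 ^ b * (Nat.factorial b) := by
  intro b
  induction b with
  | zero => simp
  | succ n ih =>
    rcases Nat.eq_zero_or_pos n with h | h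
    · subst h
      simpa using Real.one_le_exp (by norm_num : (0:ℝ) ≤ 1)
    · have haux := aux_pow n h
      have he : (0:ℝ) < Real.exp 1 := Real.exp_pos 1
      have hnn : (0:ℝ) ≤ (n:ℝ) + 1 := by positivity
      push_cast [Nat.factorial_succ]
      calc ((n:ℝ)+1)^(n+1) = ((n:ℝ)+1) * ((n:ℝ)+1)^n := by ring
        _ ≤ ((n:ℝ)+1) * (Real.exp 1 * (n:ℝ)^n) := by
            apply mul_le_mul_of_nonneg_left haux hnn
        _ ≤ ((n:ℝ)+1) * (Real.exp 1 * (Real.exp 1 ^ n * (Nat.factorial n))) := by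
            apply mul_le_mul_of_nonneg_left (mul_le_mul_of_nonneg_left ih he.le) hnn
        _ = Real.exp 1 ^ (n+1) * ((↑n + 1) * (Nat.factorial n)) := by ring

lemma fact_le_fact_mul_pow {k b : ℕ} (h : k ≤ b) :
    Nat.factorial b ≤ Nat.factorial k * b ^ (b - k) := by
  induction b with
  | zero => simp [Nat.le_zero.mp h]
  | succ n ih =>
    rcases Nat.eq_or_lt_of_le h with h1 | h1
    · simp [h1]
    · have hk : k ≤ n := Nat.lt_succ_iff.mp h1
      have := ih hk
      have h2 : (n+1) - k = (n - k) + 1 := by omega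
      calc Nat.factorial (n+1) = (n+1) * Nat.factorial n := rfl
        _ ≤ (n+1) * (Nat.factorial k * n ^ (n-k)) := Nat.mul_le_mul_left _ this
        _ ≤ (n+1) * (Nat.factorial k * (n+1) ^ (n-k)) := by
            exact Nat.mul_le_mul_left _ (Nat.mul_le_mul_left _ (Nat.pow_le_pow_left (by omega) _))
        _ = Nat.factorial k * (n+1) ^ ((n+1)-k) := by rw [h2]; ring

lemma tk_le (d k b : ℕ) (hd : 1 ≤ d) (hb : 1 ≤ b) (hk : k ≤ b) (M : ℝ) (hM : ((b:ℝ))^2 ≤ M) :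
    ((d:ℝ)*M)^k / Nat.factorial k * ((b:ℝ))^(b-k) ≤ ((d:ℝ)*M)^b / Nat.factorial b := by
  have hb1 : (1:ℝ) ≤ (b:ℝ) := by exact_mod_cast hb
  have hM1 : (1:ℝ) ≤ M := by nlinarith
  have hd1 : (1:ℝ) ≤ (d:ℝ) := by exact_mod_cast hd
  have hdM : ((b:ℝ))^2 ≤ (d:ℝ)*M := hM.trans (le_mul_of_one_le_left (by linarith) hd1)
  have hdM0 : (0:ℝ) < (d:ℝ)*M := by nlinarith
  have hfk : (0:ℝ) < (Nat.factorial k : ℝ) := by exact_mod_cast Nat.factorial_pos k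
  have hfb : (0:ℝ) < (Nat.factorial b : ℝ) := by exact_mod_cast Nat.factorial_pos b
  rw [div_mul_eq_mul_div, div_le_div_iff₀ hfk hfb]
  have hfact : (Nat.factorial b : ℝ) ≤ (Nat.factorial k : ℝ) * (b:ℝ)^(b-k) := by
    exact_mod_cast fact_le_fact_mul_pow hk
  calc ((d:ℝ)*M)^k * (b:ℝ)^(b-k) * (Nat.factorial b : ℝ)
      ≤ ((d:ℝ)*M)^k * (b:ℝ)^(b-k) * ((Nat.factorial k : ℝ) * (b:ℝ)^(b-k)) := by
        apply mul_le_mul_of_nonneg_left hfact (by positivity)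
    _ = ((d:ℝ)*M)^k * (((b:ℝ))^2)^(b-k) * (Nat.factorial k : ℝ) := by
        have hbb : (((b:ℝ))^2)^(b-k) = (b:ℝ)^(b-k) * (b:ℝ)^(b-k) := by
          rw [← pow_mul, ← pow_add]; congr 1; omega
        rw [hbb]; ring
    _ ≤ ((d:ℝ)*M)^k * ((d:ℝ)*M)^(b-k) * (Nat.factorial k : ℝ) := by
        apply mul_le_mul_of_nonneg_right _ hfk.le
        exact mul_le_mul_of_nonneg_left (pow_le_pow_left₀ (by positivity) hdM _) (by positivity)
    _ = ((d:ℝ)*M)^b * (Nat.factorial k : ℝ) := by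
        rw [← pow_add, Nat.add_sub_cancel' hk]

lemma sum_bd (d b : ℕ) (hd : 1 ≤ d) (hb : 1 ≤ b) (M : ℝ) (hM : ((b:ℝ))^2 ≤ M) :
    (∑ k ∈ range (b+1), (if k = 0 then 0 else ((d.choose k : ℝ)) * M ^ k))
      ≤ 2 * (Real.exp 1 * d / b * M)^b := by
  have hb1 : (1:ℝ) ≤ (b:ℝ) := by exact_mod_cast hb
  have hM1 : (1:ℝ) ≤ M := by nlinarith
  have hd1 : (1:ℝ) ≤ (d:ℝ) := by exact_mod_cast hd
  set c : ℕ → ℝ := fun k => if k = 0 then 0 else ((d.choose k : ℝ)) * M ^ k with hc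
  set t : ℝ := ((d:ℝ)*M)^b / Nat.factorial b with ht
  have htnn : 0 ≤ t := by positivity
  have hble : ∀ k, 1 ≤ k → k ≤ b → c k ≤ t * ((1:ℝ)/2)^(b-k) := by
    intro k hk1 hkb
    have hk0 : k ≠ 0 := by omega
    have hfk : (0:ℝ) < (Nat.factorial k : ℝ) := by exact_mod_cast Nat.factorial_pos k
    have h1 : c k ≤ ((d:ℝ)*M)^k / Nat.factorial k := by
      rw [hc]; simp only [hk0, if_false]
      have hch : ((d.choose k : ℝ)) * (Nat.factorial k : ℝ) ≤ (d:ℝ)^k := by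
        have := (Nat.descFactorial_le_pow d k)
        rw [Nat.descFactorial_eq_factorial_mul_choose] at this
        exact_mod_cast by linarith [this]
      rw [mul_pow, div_eq_mul_inv]
      calc ((d.choose k : ℝ)) * M ^ k ≤ ((d:ℝ)^k * (Nat.factorial k : ℝ)⁻¹) * M ^ k := by
            apply mul_le_mul_of_nonneg_right _ (by positivity)
            rw [← div_eq_mul_inv, le_div_iff₀ hfk]; exact hch
        _ = (d:ℝ)^k * M^k * (Nat.factorial k : ℝ)⁻¹ := by ring
    have h2 : ((d:ℝ)*M)^k / Nat.factorial k ≤ t * ((1:ℝ)/(b:ℝ))^(b-k) := by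
      have := tk_le d k b hd hb hkb M hM
      have hbpos : (0:ℝ) < (b:ℝ)^(b-k) := by positivity
      have h := mul_le_mul_of_nonneg_right this (inv_pos.mpr hbpos).le
      rw [mul_assoc, mul_inv_cancel₀ hbpos.ne', mul_one] at h
      rw [ht]
      simpa [one_div, inv_pow] using h
    have h3 : ((1:ℝ)/(b:ℝ))^(b-k) ≤ ((1:ℝ)/2)^(b-k) := by
      rcases Nat.eq_zero_or_pos (b-k) with h | h
      · simp [h]
      · have hb2 : 2 ≤ b := by omega
        apply pow_le_pow_left₀ (by positivity)
        rw [div_le_div_iff₀ (by linarith) (by norm_num)]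
        have : (2:ℝ) ≤ (b:ℝ) := by exact_mod_cast hb2
        linarith
    calc c k ≤ ((d:ℝ)*M)^k / Nat.factorial k := h1
      _ ≤ t * ((1:ℝ)/(b:ℝ))^(b-k) := h2
      _ ≤ t * ((1:ℝ)/2)^(b-k) := mul_le_mul_of_nonneg_left h3 htnn
  have hrefl : ∑ k ∈ range (b+1), c k = ∑ j ∈ range (b+1), c (b - j) := by
    rw [← Finset.sum_range_reflect]
    apply Finset.sum_congr rfl
    intro j hj
    have hje : b + 1 - 1 - j = b - j := by omega
    rw [hje]
  have hsum2 : ∑ j ∈ range (b+1), c (b - j) ≤ ∑ j ∈ range (b+1), t * ((1:ℝ)/2)^j := by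
    apply Finset.sum_le_sum
    intro j hj
    rw [Finset.mem_range] at hj
    rcases Nat.lt_or_ge j b with h | h
    · have h1 : 1 ≤ b - j := by omega
      have h2 : b - (b - j) = j := by omega
      have := hble (b - j) h1 (by omega)
      rwa [h2] at this
    · have : b - j = 0 := by omega
      rw [this]
      simp only [hc, if_pos rfl]
      positivity
  have hgeo : ∑ j ∈ range (b+1), t * ((1:ℝ)/2)^j ≤ 2 * t := by
    rw [← Finset.mul_sum]
    calc t * ∑ j ∈ range (b+1), ((1:ℝ)/2)^j ≤ t * 2 :=
          mul_le_mul_of_nonneg_left (sum_geometric_two_le _) htnn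
      _ = 2 * t := mul_comm _ _
  have hfin : t ≤ (Real.exp 1 * d / b * M)^b := by
    have hbb : ((b:ℝ))^b ≤ Real.exp 1 ^ b * (Nat.factorial b) := pow_self_le b
    have hfb : (0:ℝ) < (Nat.factorial b : ℝ) := by exact_mod_cast Nat.factorial_pos b
    have hbp : (0:ℝ) < (b:ℝ)^b := by positivity
    have heq : (Real.exp 1 * d / b * M)^b = ((d:ℝ)*M)^b * Real.exp 1 ^ b / (b:ℝ)^b := by
      rw [div_mul_eq_mul_div, div_pow, mul_pow, mul_pow]
      ring
    rw [heq, ht, div_le_div_iff₀ hfb hbp]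
    calc ((d:ℝ)*M)^b * (b:ℝ)^b ≤ ((d:ℝ)*M)^b * (Real.exp 1 ^ b * (Nat.factorial b)) := by
          apply mul_le_mul_of_nonneg_left hbb (by positivity)
      _ = ((d:ℝ)*M)^b * Real.exp 1 ^ b * (Nat.factorial b) := by ring
  calc (∑ k ∈ range (b+1), c k) = ∑ j ∈ range (b+1), c (b - j) := hrefl
    _ ≤ ∑ j ∈ range (b+1), t * ((1:ℝ)/2)^j := hsum2
    _ ≤ 2 * t := hgeo
    _ ≤ 2 * (Real.exp 1 * d / b * M)^b := by linarith [hfin]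


variable {β dX : ℕ} {p : ℝ}

/-- The basic normalized treatment fluctuation. -/
def cc (St : SNIPE.Setting β dX p) (j : Fin St.n) (x : St.Ω) : ℝ :=
  (St.Z j x - St.prob j) / (St.prob j * (1 - St.prob j))

lemma w_eq (St : SNIPE.Setting β dX p) (i : Fin St.n) (x : St.Ω) :
    St.w i x = ∑ S ∈ Sb St.n β St.Nb i, gcoef St.prob S * ∏ j ∈ S, cc St j x := rfl

lemma q_pos (St : SNIPE.Setting β dX p) (hp : 0 < p) (hp' : p ≤ 1/2) (j : Fin St.n) :
    0 < p * (1-p) ∧ p * (1-p) ≤ St.prob j * (1 - St.prob j) := by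
  obtain ⟨h1, h2⟩ := St.prob_mem j
  constructor
  · nlinarith
  · nlinarith

lemma cc_meas (St : SNIPE.Setting β dX p) (j : Fin St.n) : Measurable (cc St j) :=
  ((St.Z_meas j).sub measurable_const).div_const _

lemma cc_bdd (St : SNIPE.Setting β dX p) (hp : 0 < p) (hp' : p ≤ 1/2) (j : Fin St.n) (x : St.Ω) :
    |cc St j x| ≤ (p * (1-p))⁻¹ := by
  obtain ⟨hq0, hq1⟩ := q_pos St hp hp' j
  obtain ⟨h1, h2⟩ := St.prob_mem j
  have hqj : 0 < St.prob j * (1 - St.prob j) := lt_of_lt_of_le hq0 hq1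
  have hnum : |St.Z j x - St.prob j| ≤ 1 := by
    rcases St.Z_range j x with h | h <;> rw [h, abs_le] <;> constructor <;> nlinarith
  rw [cc, abs_div, abs_of_pos hqj]
  rw [div_le_iff₀ hqj]
  calc |St.Z j x - St.prob j| ≤ 1 := hnum
    _ ≤ (p * (1-p))⁻¹ * (p * (1-p)) := by rw [inv_mul_cancel₀ hq0.ne']
    _ ≤ (p * (1-p))⁻¹ * (St.prob j * (1 - St.prob j)) := by
        apply mul_le_mul_of_nonneg_left hq1 (by positivity)

lemma bddInt (St : SNIPE.Setting β dX p) {f : St.Ω → ℝ} (hm : Measurable f)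
    (hb : ∃ C, ∀ x, |f x| ≤ C) : MeasureTheory.Integrable f St.μ := by
  haveI := St.isProb
  obtain ⟨C, hC⟩ := hb
  exact (MeasureTheory.integrable_const C).mono' hm.aestronglyMeasurable
    (Filter.Eventually.of_forall fun x => by simpa using hC x)

lemma intZ (St : SNIPE.Setting β dX p) (hp : 0 < p) (hp' : p ≤ 1/2) (j : Fin St.n) :
    ∫ x, St.Z j x ∂St.μ = St.prob j := by
  haveI := St.isProb
  obtain ⟨h1, h2⟩ := St.prob_mem j
  have hZind : St.Z j = (St.Z j ⁻¹' {1}).indicator (fun _ => (1:ℝ)) := by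
    funext x
    rcases St.Z_range j x with h | h
    · rw [h, Set.indicator_of_notMem]
      simp [Set.mem_preimage, h]
    · rw [h, Set.indicator_of_mem]
      simp [Set.mem_preimage, h]
  rw [hZind, MeasureTheory.integral_indicator_const _ (St.Z_meas j (measurableSet_singleton 1))]
  rw [measureReal_def, St.Z_prob j]
  simp [ENNReal.toReal_ofReal (by linarith : (0:ℝ) ≤ St.prob j)]

lemma int_cc (St : SNIPE.Setting β dX p) (hp : 0 < p) (hp' : p ≤ 1/2) (j : Fin St.n) :
    ∫ x, cc St j x ∂St.μ = 0 := by
  haveI := St.isProb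
  have hZint : MeasureTheory.Integrable (St.Z j) St.μ :=
    bddInt St (St.Z_meas j) ⟨1, fun x => by rcases St.Z_range j x with h | h <;> rw [h] <;> norm_num⟩
  have : (fun x => cc St j x) =
      fun x => (St.Z j x - St.prob j) * (St.prob j * (1 - St.prob j))⁻¹ := by
    funext x; rw [cc, div_eq_mul_inv]
  rw [this, MeasureTheory.integral_mul_const, MeasureTheory.integral_sub hZint
    (MeasureTheory.integrable_const _), intZ St hp hp' j]
  simp

lemma int_cc_sq (St : SNIPE.Setting β dX p) (hp : 0 < p) (hp' : p ≤ 1/2) (j : Fin St.n) :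
    ∫ x, (cc St j x)^2 ∂St.μ = (St.prob j * (1 - St.prob j))⁻¹ := by
  haveI := St.isProb
  obtain ⟨hq0, hq1⟩ := q_pos St hp hp' j
  have hqj : 0 < St.prob j * (1 - St.prob j) := lt_of_lt_of_le hq0 hq1
  have hZint : MeasureTheory.Integrable (St.Z j) St.μ :=
    bddInt St (St.Z_meas j) ⟨1, fun x => by rcases St.Z_range j x with h | h <;> rw [h] <;> norm_num⟩
  have hkey : (fun x => (cc St j x)^2) = fun x =>
      St.Z j x * ((1 - 2 * St.prob j) * ((St.prob j * (1 - St.prob j))^2)⁻¹)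
        + (St.prob j)^2 * ((St.prob j * (1 - St.prob j))^2)⁻¹ := by
    funext x
    rw [cc, div_pow]
    have hpa : St.prob j ≠ 0 := (lt_of_lt_of_le hp (St.prob_mem j).1).ne'
    have hpb : 1 - St.prob j ≠ 0 := (by linarith [(St.prob_mem j).2] : (0:ℝ) < 1 - St.prob j).ne'
    rcases St.Z_range j x with h | h <;> rw [h] <;> field_simp <;> ring
  rw [hkey, MeasureTheory.integral_add (hZint.mul_const _) (MeasureTheory.integrable_const _),
    MeasureTheory.integral_mul_const, intZ St hp hp' j, MeasureTheory.integral_const]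
  simp only [measureReal_def, measure_univ, ENNReal.toReal_one, one_smul]
  have hpa : St.prob j ≠ 0 := (lt_of_lt_of_le hp (St.prob_mem j).1).ne'
  have hpb : 1 - St.prob j ≠ 0 := (by linarith [(St.prob_mem j).2] : (0:ℝ) < 1 - St.prob j).ne'
  field_simp
  ring

lemma intProd (St : SNIPE.Setting β dX p) (T : Finset (Fin St.n)) (φ : Fin St.n → ℝ → ℝ)
    (hφ : ∀ j, Measurable (φ j)) :
    ∫ x, ∏ j ∈ T, φ j (St.Z j x) ∂St.μ = ∏ j ∈ T, ∫ x, φ j (St.Z j x) ∂St.μ := by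
  haveI := St.isProb
  have hind : ProbabilityTheory.iIndepFun
      (fun j => φ j ∘ St.Z j) St.μ := St.Z_indep.comp φ hφ
  have hmeas : ∀ j, Measurable (φ j ∘ St.Z j) := fun j => (hφ j).comp (St.Z_meas j)
  induction T using Finset.cons_induction with
  | empty => simp
  | cons a T ha ih =>
    have hIF : ProbabilityTheory.IndepFun (∏ j ∈ T, (φ j ∘ St.Z j)) (φ a ∘ St.Z a) St.μ :=
      ProbabilityTheory.iIndepFun.indepFun_finsetProd_of_notMem hind hmeas ha
    have hPm : Measurable (∏ j ∈ T, (φ j ∘ St.Z j)) := by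
      rw [Finset.prod_fn]
      exact Finset.measurable_prod T (fun j _ => hmeas j)
    have this2 := ProbabilityTheory.IndepFun.integral_fun_mul_eq_mul_integral hIF.symm (hmeas a).aestronglyMeasurable hPm.aestronglyMeasurable
    have e2 : MeasureTheory.integral St.μ (∏ j ∈ T, (φ j ∘ St.Z j))
        = ∫ x, ∏ j ∈ T, φ j (St.Z j x) ∂St.μ := by
      congr 1
      funext x
      rw [Finset.prod_apply]
      rfl
    calc ∫ x, ∏ j ∈ Finset.cons a T ha, φ j (St.Z j x) ∂St.μ
        = ∫ x, (φ a ∘ St.Z a) x * (∏ j ∈ T, (φ j ∘ St.Z j)) x ∂St.μ := by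
          congr 1
          funext x
          rw [Finset.prod_cons, Finset.prod_apply]
          rfl
      _ = MeasureTheory.integral St.μ (φ a ∘ St.Z a)
            * MeasureTheory.integral St.μ (∏ j ∈ T, (φ j ∘ St.Z j)) := this2
      _ = (∫ x, φ a (St.Z a x) ∂St.μ) * ∫ x, ∏ j ∈ T, φ j (St.Z j x) ∂St.μ := by
          rw [e2]
          rfl
      _ = ∏ j ∈ Finset.cons a T ha, ∫ x, φ j (St.Z j x) ∂St.μ := by
          rw [Finset.prod_cons, ih]

lemma prod_union_pow {n : ℕ} (S1 S2 : Finset (Fin n)) (f : Fin n → ℝ) :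
    (∏ j ∈ S1, f j) * ∏ j ∈ S2, f j
      = ∏ j ∈ S1 ∪ S2, f j ^ ((if j ∈ S1 then 1 else 0) + (if j ∈ S2 then 1 else 0)) := by
  have e1 : ∏ j ∈ S1 ∪ S2, f j ^ (if j ∈ S1 then 1 else 0) = ∏ j ∈ S1, f j := by
    rw [← Finset.prod_subset (Finset.subset_union_left : S1 ⊆ S1 ∪ S2)
      (fun x _ hnx => by simp [hnx])]
    exact Finset.prod_congr rfl (fun x hx => by simp [hx])
  have e2 : ∏ j ∈ S1 ∪ S2, f j ^ (if j ∈ S2 then 1 else 0) = ∏ j ∈ S2, f j := by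
    rw [← Finset.prod_subset (Finset.subset_union_right : S2 ⊆ S1 ∪ S2)
      (fun x _ hnx => by simp [hnx])]
    exact Finset.prod_congr rfl (fun x hx => by simp [hx])
  rw [← e1, ← e2, ← Finset.prod_mul_distrib]
  exact Finset.prod_congr rfl (fun x _ => (pow_add _ _ _).symm)

lemma ccpow_meas (St : SNIPE.Setting β dX p) (j : Fin St.n) (m : ℕ) :
    Measurable (fun x => (cc St j x)^m) := (cc_meas St j).pow_const m

lemma ccpow_bdd (St : SNIPE.Setting β dX p) (hp : 0 < p) (hp' : p ≤ 1/2)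
    (j : Fin St.n) (m : ℕ) (x : St.Ω) :
    |(cc St j x)^m| ≤ (max 1 (p * (1-p))⁻¹)^m := by
  rw [abs_pow]
  exact pow_le_pow_left₀ (abs_nonneg _) ((cc_bdd St hp hp' j x).trans (le_max_right _ _)) m

lemma term_int (St : SNIPE.Setting β dX p) (hp : 0 < p) (hp' : p ≤ 1/2)
    (T : Finset (Fin St.n)) (a : Fin St.n → ℕ) (c : ℝ) :
    MeasureTheory.Integrable (fun x => c * ∏ j ∈ T, (cc St j x)^(a j)) St.μ := by
  apply bddInt St
  · exact (Finset.measurable_prod T (fun j _ => ccpow_meas St j (a j))).const_mul c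
  · refine ⟨|c| * ∏ j ∈ T, (max 1 (p * (1-p))⁻¹)^(a j), fun x => ?_⟩
    rw [abs_mul]
    apply mul_le_mul_of_nonneg_left _ (abs_nonneg c)
    rw [Finset.abs_prod]
    apply Finset.prod_le_prod (fun j _ => abs_nonneg _)
    exact fun j _ => ccpow_bdd St hp hp' j (a j) x

lemma int_w_sq (St : SNIPE.Setting β dX p) (hp : 0 < p) (hp' : p ≤ 1/2) (i0 : Fin St.n) :
    ∫ x, (St.w i0 x)^2 ∂St.μ
      = ∑ S ∈ Sb St.n β St.Nb i0,
          (gcoef St.prob S)^2 * ∏ j ∈ S, (St.prob j * (1 - St.prob j))⁻¹ := by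
  haveI := St.isProb
  set a : Finset (Fin St.n) → Finset (Fin St.n) → Fin St.n → ℕ :=
    fun S1 S2 j => (if j ∈ S1 then 1 else 0) + (if j ∈ S2 then 1 else 0) with ha
  have hpt : ∀ x, (St.w i0 x)^2 = ∑ S1 ∈ Sb St.n β St.Nb i0, ∑ S2 ∈ Sb St.n β St.Nb i0,
      (gcoef St.prob S1 * gcoef St.prob S2) * ∏ j ∈ S1 ∪ S2, (cc St j x)^(a S1 S2 j) := by
    intro x
    rw [w_eq, sq, Finset.sum_mul_sum]
    apply Finset.sum_congr rfl
    intro S1 _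
    apply Finset.sum_congr rfl
    intro S2 _
    rw [← prod_union_pow S1 S2 (fun j => cc St j x)]
    ring
  have hint : ∫ x, (St.w i0 x)^2 ∂St.μ = ∑ S1 ∈ Sb St.n β St.Nb i0, ∑ S2 ∈ Sb St.n β St.Nb i0,
      (gcoef St.prob S1 * gcoef St.prob S2) *
        ∫ x, ∏ j ∈ S1 ∪ S2, (cc St j x)^(a S1 S2 j) ∂St.μ := by
    rw [MeasureTheory.integral_congr_ae (Filter.Eventually.of_forall hpt)]
    rw [MeasureTheory.integral_finset_sum _ (fun S1 _ =>
      MeasureTheory.integrable_finset_sum _ (fun S2 _ => term_int St hp hp' _ _ _))]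
    apply Finset.sum_congr rfl
    intro S1 _
    rw [MeasureTheory.integral_finset_sum _ (fun S2 _ => term_int St hp hp' _ _ _)]
    apply Finset.sum_congr rfl
    intro S2 _
    rw [← MeasureTheory.integral_const_mul]
  have hterm : ∀ S1 S2 : Finset (Fin St.n),
      ∫ x, ∏ j ∈ S1 ∪ S2, (cc St j x)^(a S1 S2 j) ∂St.μ
        = ∏ j ∈ S1 ∪ S2, ∫ x, (cc St j x)^(a S1 S2 j) ∂St.μ := by
    intro S1 S2
    exact intProd St (S1 ∪ S2)
      (fun j y => ((y - St.prob j) / (St.prob j * (1 - St.prob j)))^(a S1 S2 j))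
      (fun j => ((measurable_id.sub measurable_const).div_const _).pow_const _)
  rw [hint]
  apply Finset.sum_congr rfl
  intro S1 hS1
  rw [Finset.sum_eq_single_of_mem S1 hS1]
  · rw [hterm S1 S1, Finset.union_self]
    rw [Finset.prod_congr rfl (fun j hj => by
      have : a S1 S1 j = 2 := by simp [ha, hj]
      rw [this, int_cc_sq St hp hp' j])]
    ring
  · intro S2 _ hne
    rw [hterm S1 S2]
    have hj0 : ∃ j0 ∈ S1 ∪ S2, a S1 S2 j0 = 1 := by
      by_cases h12 : S1 ⊆ S2
      · have h21 : ¬ S2 ⊆ S1 := fun h => hne (Finset.Subset.antisymm h h12)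
        obtain ⟨j0, hj1, hj2⟩ := Finset.not_subset.mp h21
        exact ⟨j0, Finset.mem_union_right _ hj1, by simp [ha, hj1, hj2]⟩
      · obtain ⟨j0, hj1, hj2⟩ := Finset.not_subset.mp h12
        exact ⟨j0, Finset.mem_union_left _ hj1, by simp [ha, hj1, hj2]⟩
    obtain ⟨j0, hj0m, hj0a⟩ := hj0
    rw [Finset.prod_eq_zero hj0m (by rw [hj0a]; simpa using int_cc St hp hp' j0), mul_zero]

lemma gcoef_abs_le_one {n : ℕ} (prob : Fin n → ℝ) (hpr : ∀ j, 0 ≤ prob j ∧ prob j ≤ 1)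
    (S : Finset (Fin n)) (hS : S.Nonempty) : |gcoef prob S| ≤ 1 := by
  have key : ∀ T : Finset (Fin n), T.Nonempty →
      (∏ j ∈ T, (1 - prob j)) + ∏ j ∈ T, prob j ≤ 1 := by
    intro T
    induction T using Finset.cons_induction with
    | empty => exact fun h => absurd h (by simp)
    | cons a T ha ih =>
      intro _
      rw [Finset.prod_cons, Finset.prod_cons]
      have hA : 0 ≤ ∏ j ∈ T, (1 - prob j) :=
        Finset.prod_nonneg (fun j _ => by linarith [(hpr j).2])
      have hB : 0 ≤ ∏ j ∈ T, prob j := Finset.prod_nonneg (fun j _ => (hpr j).1)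
      obtain ⟨h1, h2⟩ := hpr a
      rcases Finset.eq_empty_or_nonempty T with h | h
      · subst h
        simp only [Finset.prod_empty, mul_one]
        linarith
      · nlinarith [ih h]
  have hA : |∏ j ∈ S, (1 - prob j)| = ∏ j ∈ S, (1 - prob j) :=
    abs_of_nonneg (Finset.prod_nonneg (fun j _ => by linarith [(hpr j).2]))
  have hB : |∏ j ∈ S, (-prob j)| = ∏ j ∈ S, prob j := by
    rw [Finset.abs_prod]
    exact Finset.prod_congr rfl (fun j _ => by rw [abs_neg, abs_of_nonneg (hpr j).1])
  calc |gcoef prob S| ≤ |∏ j ∈ S, (1 - prob j)| + |∏ j ∈ S, (-prob j)| := abs_sub _ _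
    _ = (∏ j ∈ S, (1 - prob j)) + ∏ j ∈ S, prob j := by rw [hA, hB]
    _ ≤ 1 := key S hS

lemma int_w_sq_le (St : SNIPE.Setting β dX p) (hp : 0 < p) (hp' : p ≤ 1/2) (hβ : 1 ≤ β)
    (din : ℕ) (hdin : ∀ i, (St.Nb i).card ≤ din) (i0 : Fin St.n) :
    ∫ x, (St.w i0 x)^2 ∂St.μ
      ≤ 2 * (Real.exp 1 * din / β * max ((β : ℝ)^2) (1 / (p * (1 - p))))^β := by
  set M : ℝ := max ((β : ℝ)^2) (1 / (p * (1 - p))) with hMdef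
  have hM : ((β:ℝ))^2 ≤ M := le_max_left _ _
  have hM0 : 0 ≤ M := le_trans (by positivity) hM
  have hMq : (p * (1-p))⁻¹ ≤ M := by
    rw [hMdef, ← one_div]
    exact le_max_right _ _
  have hdin1 : 1 ≤ din := by
    have h1 : 1 ≤ (St.Nb i0).card := Finset.card_pos.mpr ⟨i0, St.self_mem i0⟩
    exact h1.trans (hdin i0)
  have hpr : ∀ j : Fin St.n, 0 ≤ St.prob j ∧ St.prob j ≤ 1 := by
    intro j
    obtain ⟨h1, h2⟩ := St.prob_mem j
    constructor <;> nlinarith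
  set F : Finset (Fin St.n) → ℝ := fun S => if S.card = 0 then 0 else M^S.card with hF
  have hFnn : ∀ S, 0 ≤ F S := by
    intro S
    rw [hF]
    dsimp only
    split
    · exact le_refl 0
    · positivity
  have step1 : ∫ x, (St.w i0 x)^2 ∂St.μ ≤ ∑ S ∈ Sb St.n β St.Nb i0, F S := by
    rw [int_w_sq St hp hp' i0]
    apply Finset.sum_le_sum
    intro S hS
    rcases Finset.eq_empty_or_nonempty S with h | h
    · subst h
      simp [hF, gcoef]
    · have hcard : S.card ≠ 0 := by simpa [Finset.card_eq_zero] using h.ne_empty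
      rw [hF]
      dsimp only
      rw [if_neg hcard]
      have hg : (gcoef St.prob S)^2 ≤ 1 := by
        have := gcoef_abs_le_one St.prob hpr S h
        nlinarith [abs_nonneg (gcoef St.prob S), sq_abs (gcoef St.prob S)]
      have hprod : ∏ j ∈ S, (St.prob j * (1 - St.prob j))⁻¹ ≤ M^S.card := by
        rw [← Finset.prod_const]
        apply Finset.prod_le_prod
        · intro j _
          exact inv_nonneg.mpr (le_of_lt (lt_of_lt_of_le (q_pos St hp hp' j).1 (q_pos St hp hp' j).2))
        · intro j _
          calc (St.prob j * (1 - St.prob j))⁻¹ ≤ (p * (1-p))⁻¹ :=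
                inv_anti₀ (q_pos St hp hp' j).1 (q_pos St hp hp' j).2
            _ ≤ M := hMq
      calc (gcoef St.prob S)^2 * ∏ j ∈ S, (St.prob j * (1 - St.prob j))⁻¹
          ≤ 1 * M^S.card := by
            apply mul_le_mul hg hprod (Finset.prod_nonneg (fun j _ =>
              inv_nonneg.mpr (le_of_lt (lt_of_lt_of_le (q_pos St hp hp' j).1 (q_pos St hp hp' j).2))))
              (by norm_num)
        _ = M^S.card := one_mul _
  have step2 : ∑ S ∈ Sb St.n β St.Nb i0, F S
      ≤ ∑ k ∈ Finset.range (β+1), (if k = 0 then 0 else ((din.choose k : ℝ)) * M ^ k) := by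
    have hsub : Sb St.n β St.Nb i0 ⊆
        (Finset.range (β+1)).biUnion (fun k => Finset.powersetCard k (St.Nb i0)) := by
      intro S hS
      rw [Sb, Finset.mem_filter, Finset.mem_powerset] at hS
      apply Finset.mem_biUnion.mpr
      exact ⟨S.card, Finset.mem_range.mpr (Nat.lt_succ_of_le hS.2),
        Finset.mem_powersetCard.mpr ⟨hS.1, rfl⟩⟩
    have hdisj : Set.PairwiseDisjoint ↑(Finset.range (β+1))
        (fun k => Finset.powersetCard k (St.Nb i0)) := by
      intro k1 _ k2 _ hne
      apply Finset.disjoint_left.mpr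
      intro S h1 h2
      exact hne ((Finset.mem_powersetCard.mp h1).2.symm.trans (Finset.mem_powersetCard.mp h2).2)
    calc ∑ S ∈ Sb St.n β St.Nb i0, F S
        ≤ ∑ S ∈ (Finset.range (β+1)).biUnion (fun k => Finset.powersetCard k (St.Nb i0)), F S :=
          Finset.sum_le_sum_of_subset_of_nonneg hsub (fun S _ _ => hFnn S)
      _ = ∑ k ∈ Finset.range (β+1), ∑ S ∈ Finset.powersetCard k (St.Nb i0), F S :=
          Finset.sum_biUnion hdisj
      _ ≤ ∑ k ∈ Finset.range (β+1), (if k = 0 then 0 else ((din.choose k : ℝ)) * M ^ k) := by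
          apply Finset.sum_le_sum
          intro k _
          have hcongr : ∑ S ∈ Finset.powersetCard k (St.Nb i0), F S
              = ∑ S ∈ Finset.powersetCard k (St.Nb i0), (if k = 0 then 0 else M^k) := by
            apply Finset.sum_congr rfl
            intro S hS
            rw [hF]
            dsimp only
            rw [(Finset.mem_powersetCard.mp hS).2]
          rw [hcongr, Finset.sum_const, Finset.card_powersetCard]
          rcases Nat.eq_zero_or_pos k with h | h
          · simp [h]
          · rw [if_neg h.ne', if_neg h.ne', nsmul_eq_mul]
            apply mul_le_mul_of_nonneg_right _ (by positivity)
            exact_mod_cast Nat.choose_le_choose k (hdin i0)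
  calc ∫ x, (St.w i0 x)^2 ∂St.μ ≤ ∑ S ∈ Sb St.n β St.Nb i0, F S := step1
    _ ≤ ∑ k ∈ Finset.range (β+1), (if k = 0 then 0 else ((din.choose k : ℝ)) * M ^ k) := step2
    _ ≤ 2 * (Real.exp 1 * din / β * M)^β := sum_bd din β hdin1 hβ M hM

lemma l2_le_sum_abs {d : ℕ} (v : Fin d → ℝ) : SNIPE.l2 v ≤ ∑ k, |v k| := by
  rw [SNIPE.l2]
  have h1 : ∑ k, v k ^ 2 ≤ (∑ k, |v k|)^2 := by
    calc ∑ k, v k ^ 2 = ∑ k, |v k| ^ 2 := by simp [sq_abs]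
      _ ≤ (∑ k, |v k|)^2 := Finset.sum_sq_le_sq_sum_of_nonneg (fun k _ => abs_nonneg _)
  calc Real.sqrt (∑ k, v k ^ 2) ≤ Real.sqrt ((∑ k, |v k|)^2) := Real.sqrt_le_sqrt h1
    _ = ∑ k, |v k| := Real.sqrt_sq (Finset.sum_nonneg (fun k _ => abs_nonneg _))

lemma w_meas (St : SNIPE.Setting β dX p) (i0 : Fin St.n) : Measurable (St.w i0) := by
  have : St.w i0 = fun x => ∑ S ∈ Sb St.n β St.Nb i0, gcoef St.prob S * ∏ j ∈ S, cc St j x := rfl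
  rw [this]
  exact Finset.measurable_sum _ (fun S _ =>
    (Finset.measurable_prod _ (fun j _ => cc_meas St j)).const_mul _)

lemma w_bdd (St : SNIPE.Setting β dX p) (hp : 0 < p) (hp' : p ≤ 1/2) (i0 : Fin St.n) :
    ∃ C, ∀ x, |St.w i0 x| ≤ C := by
  refine ⟨∑ S ∈ Sb St.n β St.Nb i0,
    |gcoef St.prob S| * (max 1 (p * (1-p))⁻¹)^S.card, fun x => ?_⟩
  rw [w_eq]
  calc |∑ S ∈ Sb St.n β St.Nb i0, gcoef St.prob S * ∏ j ∈ S, cc St j x|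
      ≤ ∑ S ∈ Sb St.n β St.Nb i0, |gcoef St.prob S * ∏ j ∈ S, cc St j x| :=
        Finset.abs_sum_le_sum_abs _ _
    _ ≤ ∑ S ∈ Sb St.n β St.Nb i0, |gcoef St.prob S| * (max 1 (p * (1-p))⁻¹)^S.card := by
        apply Finset.sum_le_sum
        intro S _
        rw [abs_mul]
        apply mul_le_mul_of_nonneg_left _ (abs_nonneg _)
        rw [Finset.abs_prod, ← Finset.prod_const]
        apply Finset.prod_le_prod (fun j _ => abs_nonneg _)
        exact fun j _ => (cc_bdd St hp hp' j x).trans (le_max_right _ _)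

lemma w_sq_int (St : SNIPE.Setting β dX p) (hp : 0 < p) (hp' : p ≤ 1/2) (i0 : Fin St.n) :
    MeasureTheory.Integrable (fun x => (St.w i0 x)^2) St.μ := by
  obtain ⟨C, hC⟩ := w_bdd St hp hp' i0
  apply bddInt St ((w_meas St i0).pow_const 2)
  refine ⟨C^2, fun x => ?_⟩
  rw [abs_pow]
  exact pow_le_pow_left₀ (abs_nonneg _) (hC x) 2

lemma vimE_abs_le (St : SNIPE.Setting β dX p) (hp : 0 < p) (hp' : p ≤ 1/2)
    (i : Fin St.n) (s : Finset (Fin St.n)) (k : Fin dX) (B : ℝ)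
    (hB : ∀ j, ∫ x, (St.w j x)^2 ∂St.μ ≤ B) :
    |St.vimE i s k| ≤ (St.n : ℝ)⁻¹ * ∑ i' ∈ St.nbrs i, |St.X i' k| * B := by
  haveI := St.isProb
  set g : St.Ω → ℝ := fun x => (St.n : ℝ)⁻¹ *
    ∑ i' ∈ St.nbrs i, |St.X i' k| * (((St.w i x)^2 + (St.w i' x)^2)/2) with hg
  have hInt2 : ∀ j, MeasureTheory.Integrable (fun x => (St.w j x)^2) St.μ := w_sq_int St hp hp'
  have hterm : ∀ i' : Fin St.n, MeasureTheory.Integrable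
      (fun x => |St.X i' k| * ((St.w i x ^ 2 + St.w i' x ^ 2)/2)) St.μ := by
    intro i'
    obtain ⟨C1, hC1⟩ := w_bdd St hp hp' i
    obtain ⟨C2, hC2⟩ := w_bdd St hp hp' i'
    apply bddInt St
    · exact ((((w_meas St i).pow_const 2).add ((w_meas St i').pow_const 2)).div_const 2).const_mul _
    · refine ⟨|St.X i' k| * ((C1^2 + C2^2)/2), fun x => ?_⟩
      rw [abs_mul, abs_abs]
      apply mul_le_mul_of_nonneg_left _ (abs_nonneg _)
      have h1 : St.w i x ^ 2 ≤ C1^2 := by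
        rw [← sq_abs]
        exact pow_le_pow_left₀ (abs_nonneg _) (hC1 x) 2
      have h2 : St.w i' x ^ 2 ≤ C2^2 := by
        rw [← sq_abs]
        exact pow_le_pow_left₀ (abs_nonneg _) (hC2 x) 2
      rw [abs_of_nonneg (by positivity : (0:ℝ) ≤ (St.w i x ^ 2 + St.w i' x ^ 2)/2)]
      linarith
  have hgint : MeasureTheory.Integrable g St.μ := by
    apply MeasureTheory.Integrable.const_mul
    exact MeasureTheory.integrable_finset_sum _ (fun i' _ => hterm i')
  have hZprod : ∀ x, |∏ t ∈ s, St.Z t x| ≤ 1 := by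
    intro x
    rw [Finset.abs_prod]
    apply Finset.prod_le_one (fun t _ => abs_nonneg _)
    intro t _
    rcases St.Z_range t x with h | h <;> rw [h] <;> norm_num
  have hpt : ∀ x, |(St.n : ℝ)⁻¹ * ∑ i' ∈ St.nbrs i,
      St.w i x * St.w i' x * St.X i' k * ∏ t ∈ s, St.Z t x| ≤ g x := by
    intro x
    rw [hg, abs_mul, abs_inv, Nat.abs_cast]
    apply mul_le_mul_of_nonneg_left _ (inv_nonneg.mpr (Nat.cast_nonneg _))
    calc |∑ i' ∈ St.nbrs i, St.w i x * St.w i' x * St.X i' k * ∏ t ∈ s, St.Z t x|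
        ≤ ∑ i' ∈ St.nbrs i, |St.w i x * St.w i' x * St.X i' k * ∏ t ∈ s, St.Z t x| :=
          Finset.abs_sum_le_sum_abs _ _
      _ ≤ ∑ i' ∈ St.nbrs i, |St.X i' k| * (((St.w i x)^2 + (St.w i' x)^2)/2) := by
          apply Finset.sum_le_sum
          intro i' _
          rw [abs_mul, abs_mul, abs_mul]
          have h1 : |St.w i x| * |St.w i' x| ≤ ((St.w i x)^2 + (St.w i' x)^2)/2 := by
            nlinarith [sq_nonneg (|St.w i x| - |St.w i' x|), sq_abs (St.w i x),
              sq_abs (St.w i' x)]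
          calc |St.w i x| * |St.w i' x| * |St.X i' k| * |∏ t ∈ s, St.Z t x|
              ≤ |St.w i x| * |St.w i' x| * |St.X i' k| * 1 := by
                apply mul_le_mul_of_nonneg_left (hZprod x) (by positivity)
            _ = |St.X i' k| * (|St.w i x| * |St.w i' x|) := by ring
            _ ≤ |St.X i' k| * (((St.w i x)^2 + (St.w i' x)^2)/2) :=
                mul_le_mul_of_nonneg_left h1 (abs_nonneg _)
  have hnorm : |St.vimE i s k| ≤ ∫ x, g x ∂St.μ := by
    have h := MeasureTheory.norm_integral_le_of_norm_le hgint
      (Filter.Eventually.of_forall (fun x => by rw [Real.norm_eq_abs]; exact hpt x))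
    rw [Real.norm_eq_abs] at h
    exact h
  have hgval : ∫ x, g x ∂St.μ = (St.n : ℝ)⁻¹ * ∑ i' ∈ St.nbrs i,
      |St.X i' k| * (((∫ x, (St.w i x)^2 ∂St.μ) + ∫ x, (St.w i' x)^2 ∂St.μ)/2) := by
    rw [hg]
    rw [MeasureTheory.integral_const_mul, MeasureTheory.integral_finset_sum _
      (fun i' _ => hterm i')]
    congr 1
    apply Finset.sum_congr rfl
    intro i' _
    rw [MeasureTheory.integral_const_mul, MeasureTheory.integral_div,
      MeasureTheory.integral_add (hInt2 i) (hInt2 i')]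
  calc |St.vimE i s k| ≤ ∫ x, g x ∂St.μ := hnorm
    _ = (St.n : ℝ)⁻¹ * ∑ i' ∈ St.nbrs i,
        |St.X i' k| * (((∫ x, (St.w i x)^2 ∂St.μ) + ∫ x, (St.w i' x)^2 ∂St.μ)/2) := hgval
    _ ≤ (St.n : ℝ)⁻¹ * ∑ i' ∈ St.nbrs i, |St.X i' k| * B := by
        apply mul_le_mul_of_nonneg_left _ (inv_nonneg.mpr (Nat.cast_nonneg _))
        apply Finset.sum_le_sum
        intro i' _
        apply mul_le_mul_of_nonneg_left _ (abs_nonneg _)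
        have h1 := hB i
        have h2 := hB i'
        linarith

end SNIPE6

/-- Lemma 2: for every unit `i` and every `S ∈ S_i^β`,
`‖E[(1/n) ∑_(i' : N_i ∩ N_i' ≠ ∅) ω_i ω_i' X_i' ∏_(k∈S) Z_k]‖₂
≤ (4 d_in d_out/n) X_max ((e d_in/β) max(β², 1/(p(1-p))))^β`. -/
theorem statement_6 (β dX : ℕ) (hβ : 1 ≤ β) (p : ℝ) (hp : 0 < p) (hp' : p ≤ 1 / 2)
    (St : SNIPE.Setting β dX p) (hn : 0 < St.n)
    (din dout : ℕ)
    (hdin : ∀ i, (St.Nb i).card ≤ din)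
    (hdout : ∀ j, (Finset.univ.filter fun i => j ∈ St.Nb i).card ≤ dout)
    (Xmax : ℝ) (hXmax : ∀ i, (∑ k, |St.X i k|) ≤ Xmax)
    (i : Fin St.n) (s : Finset (Fin St.n)) (hs : s ∈ SNIPE.Sb St.n β St.Nb i) :
    SNIPE.l2 (fun k => St.vimE i s k) ≤
      4 * din * dout / St.n * Xmax *
        (Real.exp 1 * din / β * max ((β : ℝ) ^ 2) (1 / (p * (1 - p)))) ^ β := by
  have hBkey : ∀ j : Fin St.n, ∫ x, (St.w j x)^2 ∂St.μ ≤
      2 * (Real.exp 1 * din / β * max ((β : ℝ)^2) (1 / (p * (1 - p))))^β :=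
    fun j => SNIPE6.int_w_sq_le St hp hp' hβ din hdin j
  set P : ℝ := (Real.exp 1 * din / β * max ((β : ℝ)^2) (1 / (p * (1 - p))))^β with hPdef
  have hPnn : 0 ≤ P := by
    rw [hPdef]
    have hM0 : 0 ≤ max ((β : ℝ)^2) (1 / (p * (1 - p))) := le_trans (sq_nonneg _) (le_max_left _ _)
    have : 0 ≤ Real.exp 1 * din / β := by positivity
    positivity
  have hXnn : 0 ≤ Xmax := le_trans (Finset.sum_nonneg (fun k _ => abs_nonneg _)) (hXmax i)
  have hcard : ((St.nbrs i).card : ℝ) ≤ (din : ℝ) * dout := by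
    have hsub : St.nbrs i ⊆ (St.Nb i).biUnion
        (fun j => Finset.univ.filter (fun i' => j ∈ St.Nb i')) := by
      intro i' hi'
      rw [SNIPE.Setting.nbrs, Finset.mem_filter] at hi'
      obtain ⟨j, hj⟩ := hi'.2
      rw [Finset.mem_inter] at hj
      exact Finset.mem_biUnion.mpr ⟨j, hj.1, Finset.mem_filter.mpr ⟨Finset.mem_univ _, hj.2⟩⟩
    have h1 : (St.nbrs i).card ≤ din * dout := by
      calc (St.nbrs i).card
          ≤ ((St.Nb i).biUnion (fun j => Finset.univ.filter (fun i' => j ∈ St.Nb i'))).card :=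
            Finset.card_le_card hsub
        _ ≤ ∑ j ∈ St.Nb i, (Finset.univ.filter (fun i' => j ∈ St.Nb i')).card :=
            Finset.card_biUnion_le
        _ ≤ ∑ j ∈ St.Nb i, dout := Finset.sum_le_sum (fun j _ => hdout j)
        _ = (St.Nb i).card * dout := by rw [Finset.sum_const, smul_eq_mul]
        _ ≤ din * dout := Nat.mul_le_mul_right _ (hdin i)
    exact_mod_cast h1
  have hn0 : (0:ℝ) ≤ ((St.n:ℝ))⁻¹ := inv_nonneg.mpr (Nat.cast_nonneg _)
  calc SNIPE.l2 (fun k => St.vimE i s k) ≤ ∑ k, |St.vimE i s k| := SNIPE6.l2_le_sum_abs _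
    _ ≤ ∑ k : Fin dX, (St.n : ℝ)⁻¹ * ∑ i' ∈ St.nbrs i, |St.X i' k| * (2 * P) :=
        Finset.sum_le_sum (fun k _ => SNIPE6.vimE_abs_le St hp hp' i s k (2 * P) hBkey)
    _ = (St.n : ℝ)⁻¹ * ∑ i' ∈ St.nbrs i, (∑ k, |St.X i' k|) * (2 * P) := by
        rw [← Finset.mul_sum]
        congr 1
        rw [Finset.sum_comm]
        exact Finset.sum_congr rfl (fun i' _ => by rw [Finset.sum_mul])
    _ ≤ (St.n : ℝ)⁻¹ * ∑ i' ∈ St.nbrs i, Xmax * (2 * P) := by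
        apply mul_le_mul_of_nonneg_left _ hn0
        exact Finset.sum_le_sum (fun i' _ =>
          mul_le_mul_of_nonneg_right (hXmax i') (by positivity))
    _ = (St.n : ℝ)⁻¹ * ((St.nbrs i).card : ℝ) * (Xmax * (2 * P)) := by
        rw [Finset.sum_const, nsmul_eq_mul]
        ring
    _ ≤ (St.n : ℝ)⁻¹ * ((din:ℝ) * dout) * (Xmax * (2 * P)) := by
        apply mul_le_mul_of_nonneg_right
          (mul_le_mul_of_nonneg_left hcard hn0) (by positivity)
    _ ≤ 4 * din * dout / St.n * Xmax * P := by
        rw [div_eq_mul_inv]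
        have key : (St.n : ℝ)⁻¹ * ((din:ℝ) * dout) * (Xmax * (2 * P))
            = 2 * ((St.n:ℝ)⁻¹ * ((din:ℝ) * (dout:ℝ) * (Xmax * P))) := by ring
        have key2 : 4 * (din:ℝ) * (dout:ℝ) * (St.n:ℝ)⁻¹ * Xmax * P
            = 4 * ((St.n:ℝ)⁻¹ * ((din:ℝ) * (dout:ℝ) * (Xmax * P))) := by ring
        rw [key, key2]
        have hT : 0 ≤ (St.n:ℝ)⁻¹ * ((din:ℝ) * (dout:ℝ) * (Xmax * P)) := by positivity
        linarith
end
end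

section
/- If the matrix G = E[(1/n²) Σ_i Σ_{i' : N_i ∩ N_{i'} ≠ ∅} ω_i ω_{i'} X_i X_{i'}ᵀ] is invertible, then the VIM adjustment coefficient estimator is unbiased for its population counterpart: E[θ̂_VIM] = θ_VIM. -/
noncomputable section

open MeasureTheory ProbabilityTheory Filter Finset Topology SNIPE

section AuxProof

private lemma alt_sum {γ : Type*} [DecidableEq γ] (t : Finset γ) :
    ∑ v ∈ t.powerset, (-1 : ℝ) ^ v.card = if t = ∅ then 1 else 0 := by
  induction t using Finset.induction_on with
  | empty => simp
  | @insert a s ha ih =>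
    have h2 : ∑ v ∈ s.powerset, (-1 : ℝ) ^ (insert a v).card
        = -∑ v ∈ s.powerset, (-1 : ℝ) ^ v.card := by
      rw [← Finset.sum_neg_distrib]
      refine Finset.sum_congr rfl fun v hv => ?_
      rw [Finset.card_insert_of_notMem fun h => ha (Finset.mem_powerset.1 hv h)]
      ring
    rw [Finset.sum_powerset_insert ha, ih, h2, ih]
    by_cases hs : s = ∅ <;> simp [hs]

private lemma interval_sum {γ : Type*} [DecidableEq γ] (s s' : Finset γ) (hss : s ⊆ s') :
    ∑ u ∈ s'.powerset.filter (fun u => s ⊆ u), (-1 : ℝ) ^ u.card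
      = if s' = s then (-1 : ℝ) ^ s.card else 0 := by
  have hbij : ∑ u ∈ s'.powerset.filter (fun u => s ⊆ u), (-1 : ℝ) ^ u.card
      = ∑ v ∈ (s' \ s).powerset, (-1 : ℝ) ^ s.card * (-1 : ℝ) ^ v.card := by
    refine Finset.sum_nbij' (fun u => u \ s) (fun v => s ∪ v) ?_ ?_ ?_ ?_ ?_
    · intro u hu
      rw [Finset.mem_filter, Finset.mem_powerset] at hu
      exact Finset.mem_powerset.2 (Finset.sdiff_subset_sdiff hu.1 Finset.Subset.rfl)
    · intro v hv
      rw [Finset.mem_powerset] at hv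
      refine Finset.mem_filter.2 ⟨Finset.mem_powerset.2 ?_, Finset.subset_union_left⟩
      exact Finset.union_subset hss (hv.trans Finset.sdiff_subset)
    · intro u hu
      rw [Finset.mem_filter] at hu
      exact Finset.union_sdiff_of_subset hu.2
    · intro v hv
      rw [Finset.mem_powerset] at hv
      exact Finset.union_sdiff_cancel_left (Finset.disjoint_sdiff.mono_right hv)
    · intro u hu
      rw [Finset.mem_filter] at hu
      have hcard := Finset.card_sdiff_add_card_eq_card hu.2
      rw [← pow_add]
      congr 1
      show u.card = s.card + (u \ s).card
      omega
  rw [hbij, ← Finset.mul_sum, alt_sum]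
  have hiff : s' \ s = ∅ ↔ s' = s := by
    rw [Finset.sdiff_eq_empty_iff_subset]
    exact ⟨fun h => Finset.Subset.antisymm h hss, fun h => h ▸ Finset.Subset.rfl⟩
  by_cases h : s' = s
  · simp [h, hiff.2 h]
  · rw [if_neg h, if_neg (fun he => h (hiff.1 he)), mul_zero]

namespace SNIPE.Setting

variable {β dX : ℕ} {p : ℝ} (St : Setting β dX p)

private lemma integ (F : (Fin St.n → ℝ) → ℝ) (hF : Measurable F) :
    Integrable (fun x => F fun j => St.Z j x) St.μ := by
  haveI := St.isProb
  classical
  have hmeas : Measurable fun x => F fun j => St.Z j x :=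
    hF.comp (measurable_pi_lambda _ St.Z_meas)
  set T := Fintype.piFinset (fun _ : Fin St.n => ({0, 1} : Finset ℝ)) with hT
  refine (MeasureTheory.integrable_const (∑ g ∈ T, |F g|)).mono'
    hmeas.aestronglyMeasurable (MeasureTheory.ae_of_all _ fun x => ?_)
  have hx : (fun j => St.Z j x) ∈ T := by
    rw [hT, Fintype.mem_piFinset]
    intro j
    rcases St.Z_range j x with h | h <;> simp [h]
  calc ‖F fun j => St.Z j x‖ = |F fun j => St.Z j x| := rfl
    _ ≤ ∑ g ∈ T, |F g| :=
        Finset.single_le_sum (fun g _ => abs_nonneg (F g)) hx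

private lemma exp_Z (j : Fin St.n) (h0 : 0 ≤ St.prob j) :
    ∫ x, St.Z j x ∂St.μ = St.prob j := by
  have hfe : (fun x => St.Z j x) = (St.Z j ⁻¹' {1}).indicator (fun _ => (1 : ℝ)) := by
    funext x
    rcases St.Z_range j x with h | h <;>
      simp [Set.indicator_apply, Set.mem_preimage, h]
  rw [hfe, MeasureTheory.integral_indicator_const _ ((St.Z_meas j) (measurableSet_singleton 1)),
    measureReal_def, St.Z_prob j, smul_eq_mul, mul_one, ENNReal.toReal_ofReal h0]

private lemma exp_affine (a b : Fin St.n → ℝ) (t : Finset (Fin St.n))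
    (hprob : ∀ j, 0 ≤ St.prob j) :
    ∫ x, ∏ j ∈ t, (a j + b j * St.Z j x) ∂St.μ = ∏ j ∈ t, (a j + b j * St.prob j) := by
  haveI := St.isProb
  classical
  induction t using Finset.cons_induction with
  | empty => simp
  | cons j t hj ih =>
    have hf : ∀ i : Fin St.n, Measurable fun x => a i + b i * St.Z i x :=
      fun i => measurable_const.add (measurable_const.mul (St.Z_meas i))
    have hindep : ProbabilityTheory.iIndepFun
        (fun i => fun x => a i + b i * St.Z i x) St.μ := by
      have h := St.Z_indep.comp (fun i => fun z : ℝ => a i + b i * z)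
        (fun i => measurable_const.add (measurable_const.mul measurable_id))
      exact h
    have hID : ProbabilityTheory.IndepFun
        (∏ i ∈ t, fun x => a i + b i * St.Z i x) (fun x => a j + b j * St.Z j x) St.μ :=
      hindep.indepFun_finsetProd_of_notMem hf hj
    have hprodfn : (∏ i ∈ t, fun x => a i + b i * St.Z i x)
        = fun x => ∏ i ∈ t, (a i + b i * St.Z i x) := by
      funext x
      exact Finset.prod_apply x t _
    rw [hprodfn] at hID
    have hint1 : Integrable (fun x => a j + b j * St.Z j x) St.μ :=
      St.integ (fun z => a j + b j * z j)
        (measurable_const.add (measurable_const.mul (measurable_pi_apply j)))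
    have hint2 : Integrable (fun x => ∏ i ∈ t, (a i + b i * St.Z i x)) St.μ :=
      St.integ (fun z => ∏ i ∈ t, (a i + b i * z i))
        (Finset.measurable_prod _ fun i _ =>
          measurable_const.add (measurable_const.mul (measurable_pi_apply i)))
    have hmul := ProbabilityTheory.IndepFun.integral_mul_eq_mul_integral hID.symm
      hint1.aestronglyMeasurable hint2.aestronglyMeasurable
    have hZj : ∫ x, (a j + b j * St.Z j x) ∂St.μ = a j + b j * St.prob j := by
      rw [MeasureTheory.integral_add (MeasureTheory.integrable_const _)
        ((St.integ (fun z => z j) (measurable_pi_apply j)).const_mul (b j)),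
        MeasureTheory.integral_const, MeasureTheory.integral_const_mul, St.exp_Z j (hprob j)]
      simp
    calc ∫ x, ∏ i ∈ Finset.cons j t hj, (a i + b i * St.Z i x) ∂St.μ
        = ∫ x, ((fun x => a j + b j * St.Z j x) * fun x => ∏ i ∈ t, (a i + b i * St.Z i x)) x
            ∂St.μ := by
          simp only [Finset.prod_cons, Pi.mul_apply]
      _ = (∫ x, (a j + b j * St.Z j x) ∂St.μ) * ∫ x, ∏ i ∈ t, (a i + b i * St.Z i x) ∂St.μ :=
          hmul
      _ = ∏ i ∈ Finset.cons j t hj, (a i + b i * St.prob i) := by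
          rw [hZj, ih, Finset.prod_cons]

private lemma exp_prod_Z_mul (h0 : ∀ j, 0 < St.prob j) (h1 : ∀ j, St.prob j < 1)
    (s' u : Finset (Fin St.n)) :
    ∫ x, (∏ j ∈ s', St.Z j x) * ∏ l ∈ u, (St.prob l - St.Z l x) / (1 - St.prob l) ∂St.μ
      = if u ⊆ s' then (∏ j ∈ u, -St.prob j) * ∏ j ∈ s' \ u, St.prob j else 0 := by
  classical
  set a : Fin St.n → ℝ := fun j => if j ∈ s' then 0 else St.prob j / (1 - St.prob j) with ha
  set b : Fin St.n → ℝ :=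
    fun j => if j ∈ s' then (if j ∈ u then -1 else 1) else -(1 - St.prob j)⁻¹ with hb
  have hne : ∀ j, (1 : ℝ) - St.prob j ≠ 0 := fun j => sub_ne_zero.2 (h1 j).ne'
  have hpt : ∀ x, (∏ j ∈ s', St.Z j x) * ∏ l ∈ u, (St.prob l - St.Z l x) / (1 - St.prob l)
      = ∏ j ∈ s' ∪ u, (a j + b j * St.Z j x) := by
    intro x
    have e1 : ∏ j ∈ s', St.Z j x
        = ∏ j ∈ s' ∪ u, (if j ∈ s' then St.Z j x else 1) := by
      rw [Finset.prod_ite_mem (s' ∪ u) s' (fun j => St.Z j x),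
        Finset.union_inter_cancel_left]
    have e2 : ∏ l ∈ u, (St.prob l - St.Z l x) / (1 - St.prob l)
        = ∏ j ∈ s' ∪ u, (if j ∈ u then (St.prob j - St.Z j x) / (1 - St.prob j) else 1) := by
      rw [Finset.prod_ite_mem (s' ∪ u) u (fun j => (St.prob j - St.Z j x) / (1 - St.prob j)),
        Finset.union_inter_cancel_right]
    rw [e1, e2, ← Finset.prod_mul_distrib]
    refine Finset.prod_congr rfl fun j hj => ?_
    by_cases hj1 : j ∈ s' <;> by_cases hj2 : j ∈ u
    · rcases St.Z_range j x with h | h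
      · simp [ha, hb, hj1, hj2, h]
      · simp only [ha, hb, hj1, hj2, if_true, h, one_mul, mul_one]
        rw [div_eq_iff (hne j)]
        ring
    · simp only [ha, hb, hj1, hj2, if_true, if_false]
      ring
    · simp only [ha, hb, hj1, hj2, if_true, if_false]
      field_simp [hne j]
      ring
    · exact absurd (Finset.mem_union.1 hj) (by simp [hj1, hj2])
  rw [MeasureTheory.integral_congr_ae (MeasureTheory.ae_of_all _ hpt),
    St.exp_affine a b _ (fun j => (h0 j).le)]
  by_cases hsub : u ⊆ s'
  · rw [if_pos hsub]
    have hcup : s' ∪ u = s' := Finset.union_eq_left.2 hsub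
    have hval : ∏ j ∈ s' ∪ u, (a j + b j * St.prob j)
        = ∏ j ∈ s', (if j ∈ u then -St.prob j else St.prob j) := by
      rw [hcup]
      refine Finset.prod_congr rfl fun j hj => ?_
      simp only [ha, hb, if_pos hj]
      split_ifs <;> ring
    rw [hval, ← Finset.prod_filter_mul_prod_filter_not s' (· ∈ u)]
    congr 1
    · rw [Finset.filter_mem_eq_inter, Finset.inter_eq_right.2 hsub]
      exact Finset.prod_congr rfl fun j hj => if_pos hj
    · rw [Finset.sdiff_eq_filter]
      refine Finset.prod_congr rfl fun j hj => ?_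
      rw [Finset.mem_filter] at hj
      exact if_neg hj.2
  · rw [if_neg hsub]
    obtain ⟨j₀, hj₀u, hj₀s⟩ := Finset.not_subset.1 hsub
    refine Finset.prod_eq_zero (Finset.mem_union_right _ hj₀u) ?_
    simp only [ha, hb, if_neg hj₀s]
    field_simp
    ring

private lemma exp_ahat (h0 : ∀ j, 0 < St.prob j) (h1 : ∀ j, St.prob j < 1)
    (i : Fin St.n) (s : Finset (Fin St.n)) (hs : s ∈ Sb St.n β St.Nb i) :
    ∫ x, St.ahat i s x ∂St.μ = St.α i s := by
  classical
  haveI := St.isProb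
  have hexpand : ∀ x, St.ahat i s x = ∑ s' ∈ Sb St.n β St.Nb i,
      ∑ u ∈ (Sb St.n β St.Nb i).filter (fun u => s ⊆ u),
        (St.α i s' * ∏ j ∈ s, (-1 / St.prob j)) *
          ((∏ j ∈ s', St.Z j x) * ∏ l ∈ u, (St.prob l - St.Z l x) / (1 - St.prob l)) := by
    intro x
    simp only [Setting.ahat, alphaHat, Setting.Yo, Ypot]
    rw [Finset.sum_mul, Finset.sum_mul_sum]
    exact Finset.sum_congr rfl fun s' _ => Finset.sum_congr rfl fun u _ => by ring
  have hintterm : ∀ (s' u : Finset (Fin St.n)), Integrable (fun x =>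
      (St.α i s' * ∏ j ∈ s, (-1 / St.prob j)) *
        ((∏ j ∈ s', St.Z j x) * ∏ l ∈ u, (St.prob l - St.Z l x) / (1 - St.prob l))) St.μ := by
    intro s' u
    exact St.integ (fun z => (St.α i s' * ∏ j ∈ s, (-1 / St.prob j)) *
        ((∏ j ∈ s', z j) * ∏ l ∈ u, (St.prob l - z l) / (1 - St.prob l)))
      (measurable_const.mul ((Finset.measurable_prod _ fun j _ => measurable_pi_apply j).mul
        (Finset.measurable_prod _ fun l _ =>
          (measurable_const.sub (measurable_pi_apply l)).div_const _)))
  rw [MeasureTheory.integral_congr_ae (MeasureTheory.ae_of_all _ hexpand),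
    MeasureTheory.integral_finset_sum _ (fun s' _ =>
      MeasureTheory.integrable_finset_sum _ (fun u _ => hintterm s' u))]
  have hstep : ∀ s' ∈ Sb St.n β St.Nb i,
      (∫ x, ∑ u ∈ (Sb St.n β St.Nb i).filter (fun u => s ⊆ u),
        (St.α i s' * ∏ j ∈ s, (-1 / St.prob j)) *
          ((∏ j ∈ s', St.Z j x) * ∏ l ∈ u, (St.prob l - St.Z l x) / (1 - St.prob l)) ∂St.μ)
      = if s' = s then St.α i s else 0 := by
    intro s' hs'
    rw [MeasureTheory.integral_finset_sum _ (fun u _ => hintterm s' u)]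
    have hs'mem : s' ⊆ St.Nb i ∧ s'.card ≤ β := by
      rw [Sb, Finset.mem_filter, Finset.mem_powerset] at hs'
      exact hs'
    have hterm : ∀ u ∈ (Sb St.n β St.Nb i).filter (fun u => s ⊆ u),
        (∫ x, (St.α i s' * ∏ j ∈ s, (-1 / St.prob j)) *
          ((∏ j ∈ s', St.Z j x) * ∏ l ∈ u, (St.prob l - St.Z l x) / (1 - St.prob l)) ∂St.μ)
        = (St.α i s' * ∏ j ∈ s, (-1 / St.prob j)) *
            (if u ⊆ s' then (∏ j ∈ u, -St.prob j) * ∏ j ∈ s' \ u, St.prob j else 0) := by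
      intro u _
      rw [MeasureTheory.integral_const_mul, St.exp_prod_Z_mul h0 h1 s' u]
    rw [Finset.sum_congr rfl hterm, ← Finset.mul_sum]
    have hfilter : ((Sb St.n β St.Nb i).filter (fun u => s ⊆ u)).filter (fun u => u ⊆ s')
        = s'.powerset.filter (fun u => s ⊆ u) := by
      ext u
      simp only [Finset.mem_filter, Finset.mem_powerset, Sb]
      constructor
      · rintro ⟨⟨-, h2⟩, h3⟩
        exact ⟨h3, h2⟩
      · rintro ⟨h3, h2⟩
        exact ⟨⟨⟨h3.trans hs'mem.1, (Finset.card_le_card h3).trans hs'mem.2⟩, h2⟩, h3⟩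
    have hsum : ∑ u ∈ (Sb St.n β St.Nb i).filter (fun u => s ⊆ u),
        (if u ⊆ s' then (∏ j ∈ u, -St.prob j) * ∏ j ∈ s' \ u, St.prob j else 0)
        = if s' = s then ((-1 : ℝ) ^ s.card * ∏ j ∈ s, St.prob j) else 0 := by
      rw [← Finset.sum_filter, hfilter]
      have hps : ∀ u ∈ s'.powerset.filter (fun u => s ⊆ u),
          (∏ j ∈ u, -St.prob j) * ∏ j ∈ s' \ u, St.prob j
          = (-1 : ℝ) ^ u.card * ∏ j ∈ s', St.prob j := by
        intro u hu
        rw [Finset.mem_filter, Finset.mem_powerset] at hu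
        have hneg : ∏ j ∈ u, -St.prob j = (-1 : ℝ) ^ u.card * ∏ j ∈ u, St.prob j := by
          rw [← Finset.prod_const (-1 : ℝ), ← Finset.prod_mul_distrib]
          exact Finset.prod_congr rfl fun j _ => by ring
        rw [hneg, mul_assoc, mul_comm (∏ j ∈ u, St.prob j), Finset.prod_sdiff hu.1]
      rw [Finset.sum_congr rfl hps, ← Finset.sum_mul]
      by_cases hss : s ⊆ s'
      · rw [interval_sum s s' hss]
        by_cases h : s' = s
        · rw [if_pos h, if_pos h, h]
        · rw [if_neg h, if_neg h, zero_mul]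
      · have hempty : s'.powerset.filter (fun u => s ⊆ u) = ∅ := by
          rw [Finset.filter_eq_empty_iff]
          intro u hu hsu
          exact hss (hsu.trans (Finset.mem_powerset.1 hu))
        have hne' : s' ≠ s := fun h => hss (h ▸ Finset.Subset.rfl)
        rw [hempty, Finset.sum_empty, zero_mul, if_neg hne']
    rw [hsum]
    by_cases h : s' = s
    · rw [if_pos h, if_pos h, h, mul_assoc]
      have hone : (∏ j ∈ s, (-1 / St.prob j)) * ((-1 : ℝ) ^ s.card * ∏ j ∈ s, St.prob j)
          = 1 := by
        rw [← Finset.prod_const (-1 : ℝ), ← Finset.prod_mul_distrib, ← Finset.prod_mul_distrib]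
        exact Finset.prod_eq_one fun j _ => by field_simp [(h0 j).ne']
      rw [hone, mul_one]
    · rw [if_neg h, if_neg h, mul_zero]
  rw [Finset.sum_congr rfl hstep,
    Finset.sum_ite_eq' (Sb St.n β St.Nb i) s (fun _ => St.α i s), if_pos hs]

private lemma measurable_wt (n β : ℕ) (Nb : Fin n → Finset (Fin n)) (prob : Fin n → ℝ)
    (i : Fin n) : Measurable (wt n β Nb prob i) :=
  Finset.measurable_sum _ fun _ _ => measurable_const.mul <|
    Finset.measurable_prod _ fun j _ =>
      ((measurable_pi_apply j).sub measurable_const).div_const _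

private lemma measurable_Ypot (n β : ℕ) (Nb : Fin n → Finset (Fin n))
    (α : Fin n → Finset (Fin n) → ℝ) (i : Fin n) : Measurable (Ypot n β Nb α i) :=
  Finset.measurable_sum _ fun _ _ => measurable_const.mul <|
    Finset.measurable_prod _ fun j _ => measurable_pi_apply j

private lemma mem_nbrs_symm {i i' : Fin St.n} : i' ∈ St.nbrs i ↔ i ∈ St.nbrs i' := by
  simp only [Setting.nbrs, Finset.mem_filter, Finset.mem_univ, true_and]
  rw [Finset.inter_comm]

private lemma swap_nbrs (F : Fin St.n → Fin St.n → ℝ) :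
    ∑ i, ∑ i' ∈ St.nbrs i, F i i' = ∑ i, ∑ i' ∈ St.nbrs i, F i' i := by
  have h : ∀ (G : Fin St.n → Fin St.n → ℝ) (i : Fin St.n),
      ∑ i' ∈ St.nbrs i, G i i' = ∑ i' : Fin St.n, if i' ∈ St.nbrs i then G i i' else 0 :=
    fun G i => by rw [Finset.sum_ite_mem, Finset.univ_inter]
  calc ∑ i, ∑ i' ∈ St.nbrs i, F i i'
      = ∑ i, ∑ i' : Fin St.n, if i' ∈ St.nbrs i then F i i' else 0 := by
        exact Finset.sum_congr rfl fun i _ => h F i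
    _ = ∑ i', ∑ i : Fin St.n, if i' ∈ St.nbrs i then F i i' else 0 := Finset.sum_comm
    _ = ∑ i, ∑ i' : Fin St.n, if i' ∈ St.nbrs i then F i' i else 0 := by
        refine Finset.sum_congr rfl fun a _ => Finset.sum_congr rfl fun b _ => ?_
        exact if_congr St.mem_nbrs_symm rfl rfl
    _ = ∑ i, ∑ i' ∈ St.nbrs i, F i' i := by
        exact Finset.sum_congr rfl fun i _ => (h (fun i i' => F i' i) i).symm

end SNIPE.Setting

end AuxProof

/-- if `G` is invertible then the VIM adjustment coefficient estimator is
unbiased for its population counterpart: `E[θ̂_VIM] = θ_VIM`. -/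
theorem statement_9 (β dX : ℕ) (hβ : 1 ≤ β) (p : ℝ) (hp : 0 < p) (hp' : p ≤ 1 / 2)
    (St : SNIPE.Setting β dX p) (hG : IsUnit St.Gmat) :
    (fun k => St.E fun x => St.thetaHatVIM x k) = St.thetaVIM := by
  classical
  haveI := St.isProb
  have h0 : ∀ j, 0 < St.prob j := fun j => lt_of_lt_of_le hp (St.prob_mem j).1
  have h1 : ∀ j, St.prob j < 1 := fun j =>
    lt_of_le_of_lt (St.prob_mem j).2 (by linarith)
  have hintahat : ∀ (l : Fin dX) (i : Fin St.n) (s : Finset (Fin St.n)),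
      Integrable (fun x => St.ahat i s x * St.vimE i s l) St.μ := by
    intro l i s
    exact St.integ (fun z =>
      SNIPE.alphaHat St.n β St.Nb St.prob (SNIPE.Ypot St.n β St.Nb St.α i z) i s z
        * St.vimE i s l)
      ((((SNIPE.Setting.measurable_Ypot St.n β St.Nb St.α i).mul measurable_const).mul
        (Finset.measurable_sum _ fun u _ => Finset.measurable_prod _ fun t _ =>
          (measurable_const.sub (measurable_pi_apply t)).div_const _)).mul_const _)
  have hintw : ∀ (l : Fin dX) (i : Fin St.n) (s : Finset (Fin St.n)),
      Integrable (fun x => St.α i s * ((St.n : ℝ)⁻¹ * ((St.n : ℝ)⁻¹ *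
        ∑ i' ∈ St.nbrs i, St.w i x * St.w i' x * St.X i' l * ∏ t ∈ s, St.Z t x))) St.μ := by
    intro l i s
    exact St.integ (fun z => St.α i s * ((St.n : ℝ)⁻¹ * ((St.n : ℝ)⁻¹ *
        ∑ i' ∈ St.nbrs i, SNIPE.wt St.n β St.Nb St.prob i z * SNIPE.wt St.n β St.Nb St.prob i' z
          * St.X i' l * ∏ t ∈ s, z t)))
      (measurable_const.mul (measurable_const.mul (measurable_const.mul
        (Finset.measurable_sum _ fun i' _ =>
          ((((SNIPE.Setting.measurable_wt St.n β St.Nb St.prob i).mul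
            (SNIPE.Setting.measurable_wt St.n β St.Nb St.prob i')).mul_const _).mul
            (Finset.measurable_prod _ fun t _ => measurable_pi_apply t))))))
  have key : ∀ l : Fin dX,
      (∫ x, (St.n : ℝ)⁻¹ * ∑ i, ∑ s ∈ Sb St.n β St.Nb i,
        St.ahat i s x * St.vimE i s l ∂St.μ)
      = ∫ x, (((St.n : ℝ)) ^ 2)⁻¹ *
          ∑ i, ∑ i' ∈ St.nbrs i, St.w i x * St.w i' x * St.X i l * St.Yo i' x ∂St.μ := by
    intro l
    have hLHS : (∫ x, (St.n : ℝ)⁻¹ * ∑ i, ∑ s ∈ Sb St.n β St.Nb i,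
        St.ahat i s x * St.vimE i s l ∂St.μ)
        = ∑ i, ∑ s ∈ Sb St.n β St.Nb i, St.α i s * ((St.n : ℝ)⁻¹ * St.vimE i s l) := by
      rw [MeasureTheory.integral_const_mul,
        MeasureTheory.integral_finset_sum _ (fun i _ =>
          MeasureTheory.integrable_finset_sum _ fun s _ => hintahat l i s),
        Finset.mul_sum]
      refine Finset.sum_congr rfl fun i _ => ?_
      rw [MeasureTheory.integral_finset_sum _ (fun s _ => hintahat l i s), Finset.mul_sum]
      refine Finset.sum_congr rfl fun s hsmem => ?_
      rw [MeasureTheory.integral_mul_const, St.exp_ahat h0 h1 i s hsmem]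
      ring
    have hpt : ∀ x, (((St.n : ℝ)) ^ 2)⁻¹ * ∑ i, ∑ i' ∈ St.nbrs i,
        St.w i x * St.w i' x * St.X i l * St.Yo i' x
        = ∑ i, ∑ s ∈ Sb St.n β St.Nb i, St.α i s * ((St.n : ℝ)⁻¹ * ((St.n : ℝ)⁻¹ *
            ∑ i' ∈ St.nbrs i, St.w i x * St.w i' x * St.X i' l * ∏ t ∈ s, St.Z t x)) := by
      intro x
      rw [St.swap_nbrs (fun a b => St.w a x * St.w b x * St.X a l * St.Yo b x)]
      simp only [Setting.Yo, Ypot, Finset.mul_sum]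
      refine Finset.sum_congr rfl fun i _ => ?_
      rw [Finset.sum_comm]
      exact Finset.sum_congr rfl fun s _ => Finset.sum_congr rfl fun i' _ => by ring
    have hRHS : (∫ x, (((St.n : ℝ)) ^ 2)⁻¹ *
        ∑ i, ∑ i' ∈ St.nbrs i, St.w i x * St.w i' x * St.X i l * St.Yo i' x ∂St.μ)
        = ∑ i, ∑ s ∈ Sb St.n β St.Nb i, St.α i s * ((St.n : ℝ)⁻¹ * St.vimE i s l) := by
      rw [MeasureTheory.integral_congr_ae (MeasureTheory.ae_of_all _ hpt),
        MeasureTheory.integral_finset_sum _ (fun i _ =>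
          MeasureTheory.integrable_finset_sum _ fun s _ => hintw l i s)]
      refine Finset.sum_congr rfl fun i _ => ?_
      rw [MeasureTheory.integral_finset_sum _ (fun s _ => hintw l i s)]
      refine Finset.sum_congr rfl fun s _ => ?_
      rw [MeasureTheory.integral_const_mul, MeasureTheory.integral_const_mul]
      rfl
    rw [hLHS, hRHS]
  funext k
  simp only [Setting.thetaHatVIM, Setting.thetaVIM, Matrix.mulVec, dotProduct,
    Setting.E]
  rw [MeasureTheory.integral_finset_sum _ (fun l _ =>
    ((MeasureTheory.integrable_finset_sum _ (fun i (_ : i ∈ Finset.univ) =>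
      MeasureTheory.integrable_finset_sum _ fun s _ => hintahat l i s)).const_mul
        ((St.n : ℝ)⁻¹)).const_mul _)]
  exact Finset.sum_congr rfl fun l _ => by
    rw [MeasureTheory.integral_const_mul, key l]
end
end
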